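/- For m = n = 3, with local links L\R = {(1,2),(2,3)} and remote link set R = {(1,3)}, the polytope P_{yz} defined by y ∈ Y together with the linking constraints y_i = A' z_{ik}, y_k = A'' z_{ik} for (i,k) ∈ L and z ≥ 0, is strictly larger than the convex hull of its integer points. In particular, the point given by y_{11}=y_{12}=y_{21}=y_{22}=1/2, y_{32}=3/4, y_{33}=1/4, z_{1121}=z_{2132}=z_{1222}=z_{1232}=1/2, z_{2232}=z_{2233}=z_{1132}=z_{1133}=1/4 (all other coordinates 0) lies in P_{yz} but not in the convex hull of the integer points of P_{yz}. -/

import Mathlib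

open Finset

/-- The threading polytope `Y ⊆ ℝ^{m×n}`. -/
def threadingPolytope (m n : ℕ) : Set (Fin m → Fin n → ℝ) :=
  {y | (∀ i, ∑ j, y i j = 1) ∧
       (∀ (i : Fin m) (hi : (i : ℕ) + 1 < m) (j : Fin n), (j : ℕ) + 1 < n →
         ∑ l ∈ Finset.univ.filter (· ≤ j), y ⟨(i : ℕ) + 1, hi⟩ l ≤
           ∑ l ∈ Finset.univ.filter (· ≤ j), y i l) ∧
       (∀ i j, 0 ≤ y i j)}

/-- Constraints attached to a link `(i,k)` with variables `w j l` (representing `z_{ijkl}`,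
supported on `j ≤ l`): nonnegativity, and the marginal constraints
`y_{ij} = ∑_{l ≥ j} z_{ijkl}` and `y_{kl} = ∑_{j ≤ l} z_{ijkl}`. -/
def linkConstraints {m n : ℕ} (y : Fin m → Fin n → ℝ) (i k : Fin m)
    (w : Fin n → Fin n → ℝ) : Prop :=
  (∀ j l, 0 ≤ w j l) ∧ (∀ j l : Fin n, l < j → w j l = 0) ∧
  (∀ j, y i j = ∑ l, w j l) ∧ (∀ l, y k l = ∑ j, w j l)

/-- The polytope `P_{yz}` for `m = n = 3` with links `L = {(1,2), (2,3), (1,3)}`: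
points are `(y, z₁₂, z₂₃, z₁₃)`. -/
def Pyz : Set ((Fin 3 → Fin 3 → ℝ) × (Fin 3 → Fin 3 → ℝ) × (Fin 3 → Fin 3 → ℝ) ×
    (Fin 3 → Fin 3 → ℝ)) :=
  {p | p.1 ∈ threadingPolytope 3 3 ∧
       linkConstraints p.1 0 1 p.2.1 ∧
       linkConstraints p.1 1 2 p.2.2.1 ∧
       linkConstraints p.1 0 2 p.2.2.2}

/-- The fractional point `A` of the paper:
`y₁₁ = y₁₂ = y₂₁ = y₂₂ = 1/2`, `y₃₂ = 3/4`, `y₃₃ = 1/4`,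
`z₁₁₂₁ = z₂₁₃₂ = z₁₂₂₂ = z₁₂₃₂ = 1/2`, `z₂₂₃₂ = z₂₂₃₃ = z₁₁₃₂ = z₁₁₃₃ = 1/4`. -/
noncomputable def ptA : (Fin 3 → Fin 3 → ℝ) × (Fin 3 → Fin 3 → ℝ) × (Fin 3 → Fin 3 → ℝ) ×
    (Fin 3 → Fin 3 → ℝ) :=
  (!![1/2, 1/2, 0; 1/2, 1/2, 0; 0, 3/4, 1/4],
   !![1/2, 0, 0; 0, 1/2, 0; 0, 0, 0],
   !![0, 1/2, 0; 0, 1/4, 1/4; 0, 0, 0],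
   !![0, 1/4, 1/4; 0, 1/2, 0; 0, 0, 0])


abbrev SpAux := (Fin 3 → Fin 3 → ℝ) × (Fin 3 → Fin 3 → ℝ) × (Fin 3 → Fin 3 → ℝ) ×
    (Fin 3 → Fin 3 → ℝ)

def sepF : SpAux →ₗ[ℝ] ℝ where
  toFun p := p.2.2.2 0 2 - p.2.1 0 1 - p.2.1 0 2 - p.2.2.1 0 2
  map_add' p q := by simp; ring
  map_smul' c p := by simp [smul_eq_mul]; ring

lemma intSep (p : SpAux) (hp : p ∈ Pyz)
    (hz12 : ∀ j l, p.2.1 j l = 0 ∨ p.2.1 j l = 1)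
    (hz13 : ∀ j l, p.2.2.2 j l = 0 ∨ p.2.2.2 j l = 1) :
    sepF p ≤ 0 := by
  obtain ⟨⟨hsum, hmono, hnn⟩, ⟨h12n, h12t, h12r, h12c⟩, ⟨h23n, h23t, h23r, h23c⟩,
    ⟨h13n, h13t, h13r, h13c⟩⟩ := hp
  simp only [sepF, LinearMap.coe_mk, AddHom.coe_mk]
  rcases hz13 0 2 with h02 | h02
  · have := h12n 0 1; have := h12n 0 2; have := h23n 0 2; linarith
  · have e1 : p.1 0 0 = p.2.2.2 0 0 + p.2.2.2 0 1 + p.2.2.2 0 2 := by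
      have := h13r 0; rwa [Fin.sum_univ_three] at this
    have e2 : p.1 2 2 = p.2.2.2 0 2 + p.2.2.2 1 2 + p.2.2.2 2 2 := by
      have := h13c 2; rwa [Fin.sum_univ_three] at this
    have hs0 : p.1 0 0 + p.1 0 1 + p.1 0 2 = 1 := by
      have := hsum 0; rwa [Fin.sum_univ_three] at this
    have hs2 : p.1 2 0 + p.1 2 1 + p.1 2 2 = 1 := by
      have := hsum 2; rwa [Fin.sum_univ_three] at this
    have hy00 : p.1 0 0 = 1 := by
      have h1 := h13n 0 0; have h2 := h13n 0 1
      have h3 := hnn 0 1; have h4 := hnn 0 2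
      linarith
    have hy01 : p.1 0 1 = 0 := by have := hnn 0 1; have := hnn 0 2; linarith
    have hy20 : p.1 2 0 = 0 := by
      have h1 := h13n 1 2; have h2 := h13n 2 2
      have := hnn 2 0; have := hnn 2 1; linarith
    have hy21 : p.1 2 1 = 0 := by
      have h1 := h13n 1 2; have h2 := h13n 2 2
      have := hnn 2 0; have := hnn 2 1; linarith
    have e3 : p.1 0 0 = p.2.1 0 0 + p.2.1 0 1 + p.2.1 0 2 := by
      have := h12r 0; rwa [Fin.sum_univ_three] at this
    rcases hz12 0 0 with h00 | h00
    · have := h23n 0 2; linarith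
    · have e4 : p.1 1 0 = p.2.1 0 0 + p.2.1 1 0 + p.2.1 2 0 := by
        have := h12c 0; rwa [Fin.sum_univ_three] at this
      have hs1 : p.1 1 0 + p.1 1 1 + p.1 1 2 = 1 := by
        have := hsum 1; rwa [Fin.sum_univ_three] at this
      have hy10 : p.1 1 0 = 1 := by
        have := h12n 1 0; have := h12n 2 0
        have := hnn 1 1; have := hnn 1 2; linarith
      have e5 : p.1 1 0 = p.2.2.1 0 0 + p.2.2.1 0 1 + p.2.2.1 0 2 := by
        have := h23r 0; rwa [Fin.sum_univ_three] at this
      have e6 : p.1 2 0 = p.2.2.1 0 0 + p.2.2.1 1 0 + p.2.2.1 2 0 := by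
        have := h23c 0; rwa [Fin.sum_univ_three] at this
      have e7 : p.1 2 1 = p.2.2.1 0 1 + p.2.2.1 1 1 + p.2.2.1 2 1 := by
        have := h23c 1; rwa [Fin.sum_univ_three] at this
      have := h23n 1 0; have := h23n 2 0; have := h23n 1 1; have := h23n 2 1
      have := h12n 0 1; have := h12n 0 2
      linarith

set_option maxHeartbeats 1000000 in
lemma ptA_mem_Pyz : ptA ∈ Pyz := by
  have hfilt0 : (Finset.univ.filter (· ≤ (0:Fin 3))) = {0} := by decide
  have hfilt1 : (Finset.univ.filter (· ≤ (1:Fin 3))) = {0,1} := by decide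
  refine ⟨⟨?_, ?_, ?_⟩, ⟨?_, ?_, ?_, ?_⟩, ⟨?_, ?_, ?_, ?_⟩, ⟨?_, ?_, ?_, ?_⟩⟩
  · intro i; fin_cases i <;> norm_num [ptA, Fin.sum_univ_three, Matrix.cons_val_two]
  · intro i hi j hj
    fin_cases i <;> fin_cases j <;>
      first
      | (revert hi; decide)
      | (simp_all [ptA, hfilt0, hfilt1, Finset.sum_insert, Finset.sum_singleton]; done)
      | (simp_all [ptA, hfilt0, hfilt1, Finset.sum_insert, Finset.sum_singleton] <;> norm_num)
  · intro i j; fin_cases i <;> fin_cases j <;> norm_num [ptA]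
  · intro j l; fin_cases j <;> fin_cases l <;> norm_num [ptA]
  · intro j l h; fin_cases j <;> fin_cases l <;>
      first | (revert h; decide) | rfl | norm_num [ptA, Matrix.vecHead, Matrix.vecTail]
  · intro j; fin_cases j <;> norm_num [ptA, Fin.sum_univ_three, Matrix.cons_val_two, Matrix.vecHead, Matrix.vecTail]
  · intro l; fin_cases l <;> norm_num [ptA, Fin.sum_univ_three, Matrix.cons_val_two, Matrix.vecHead, Matrix.vecTail]
  · intro j l; fin_cases j <;> fin_cases l <;> norm_num [ptA]
  · intro j l h; fin_cases j <;> fin_cases l <;>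
      first | (revert h; decide) | rfl | norm_num [ptA, Matrix.vecHead, Matrix.vecTail]
  · intro j; fin_cases j <;> norm_num [ptA, Fin.sum_univ_three, Matrix.cons_val_two, Matrix.vecHead, Matrix.vecTail]
  · intro l; fin_cases l <;> norm_num [ptA, Fin.sum_univ_three, Matrix.cons_val_two, Matrix.vecHead, Matrix.vecTail]
  · intro j l; fin_cases j <;> fin_cases l <;> norm_num [ptA]
  · intro j l h; fin_cases j <;> fin_cases l <;>
      first | (revert h; decide) | rfl | norm_num [ptA, Matrix.vecHead, Matrix.vecTail]
  · intro j; fin_cases j <;> norm_num [ptA, Fin.sum_univ_three, Matrix.cons_val_two, Matrix.vecHead, Matrix.vecTail]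
  · intro l; fin_cases l <;> norm_num [ptA, Fin.sum_univ_three, Matrix.cons_val_two, Matrix.vecHead, Matrix.vecTail]

/-- For `m = n = 3` with the remote link `(1,3)`, the polytope `P_{yz}` is strictly larger
than the convex hull of its integer (0-1) points: the point `A` lies in `P_{yz}` but not in
the convex hull of the 0-1 points of `P_{yz}`. -/
theorem Pyz_not_integral :
    ptA ∈ Pyz ∧
    ptA ∉ convexHull ℝ {p ∈ Pyz |
      (∀ i j, p.1 i j = 0 ∨ p.1 i j = 1) ∧
      (∀ j l, p.2.1 j l = 0 ∨ p.2.1 j l = 1) ∧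
      (∀ j l, p.2.2.1 j l = 0 ∨ p.2.2.1 j l = 1) ∧
      (∀ j l, p.2.2.2 j l = 0 ∨ p.2.2.2 j l = 1)} := by
  refine ⟨ptA_mem_Pyz, ?_⟩
  intro hmem
  have hsub : convexHull ℝ {p ∈ Pyz |
      (∀ i j, p.1 i j = 0 ∨ p.1 i j = 1) ∧
      (∀ j l, p.2.1 j l = 0 ∨ p.2.1 j l = 1) ∧
      (∀ j l, p.2.2.1 j l = 0 ∨ p.2.2.1 j l = 1) ∧
      (∀ j l, p.2.2.2 j l = 0 ∨ p.2.2.2 j l = 1)} ⊆ {p : SpAux | sepF p ≤ 0} := by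
    apply convexHull_min
    · rintro p ⟨hp, _, h12, _, h13⟩
      exact intSep p hp h12 h13
    · exact convex_halfSpace_le sepF.isLinear 0
  have := hsub hmem
  simp only [Set.mem_setOf_eq, sepF, LinearMap.coe_mk, AddHom.coe_mk] at this
  norm_num [ptA, Matrix.cons_val_zero, Matrix.cons_val_one, Matrix.head_cons, Matrix.cons_val_two] at this
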